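/- Every function f : (0,∞) → (0,∞) satisfying (1-z)·f(x) = f(f(xz)·(1-z)/z) for all x > 0 and 0 < z < 1 is of the form f(x) = x/(Cx+1) for some constant C ≥ 0. -/

import Mathlib

theorem stmt4 (f : ℝ → ℝ) (hpos : ∀ x : ℝ, 0 < x → 0 < f x)
    (heq : ∀ x : ℝ, 0 < x → ∀ z : ℝ, 0 < z → z < 1 →
      (1 - z) * f x = f (f (x * z) * ((1 - z) / z))) :
    ∃ C : ℝ, 0 ≤ C ∧ ∀ x : ℝ, 0 < x → f x = x / (C * x + 1) := by
  set g : ℝ → ℝ := fun s => s / f s with hgdef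
  have hg : ∀ s, 0 < s → 0 < g s := fun s hs => div_pos hs (hpos s hs)
  have hargpos : ∀ s t, 0 < s → 0 < t → 0 < s + g s * t := by
    intro s t hs ht
    have := hg s hs
    positivity
  -- key lemma
  have hkey : ∀ s t, 0 < s → 0 < t → f (s + g s * t) = f t * (f s + t) / t := by
    intro s t hs ht
    have hfs := hpos s hs
    have hfst : (0:ℝ) < f s + t := by linarith
    have hz1 : (0:ℝ) < f s / (f s + t) := div_pos hfs hfst
    have hz2 : f s / (f s + t) < 1 := (div_lt_one hfst).2 (by linarith)
    have hx : (0:ℝ) < s * (f s + t) / f s := by positivity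
    have h := heq _ hx _ hz1 hz2
    have e1 : s * (f s + t) / f s * (f s / (f s + t)) = s := by
      field_simp
    have e2 : 1 - f s / (f s + t) = t / (f s + t) := by
      field_simp
      ring
    have e3 : t / (f s + t) / (f s / (f s + t)) = t / f s := by
      field_simp
    rw [e1, e2, e3] at h
    have e4 : f s * (t / f s) = t := by field_simp
    rw [e4] at h
    have e5 : s * (f s + t) / f s = s + g s * t := by
      simp only [hgdef]
      field_simp
    rw [e5] at h
    -- h : t / (f s + t) * f (s + g s * t) = f t
    field_simp at h ⊢
    linarith [h]
  -- multiplicativity of g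
  have hmul : ∀ s t, 0 < s → 0 < t → g (s + g s * t) = g s * g t := by
    intro s t hs ht
    have hfs := hpos s hs
    have hft := hpos t ht
    have hfst : (0:ℝ) < f s + t := by linarith
    have : g (s + g s * t) = (s + g s * t) / (f t * (f s + t) / t) := by
      simp only [hgdef]
      rw [hkey s t hs ht]
    rw [this]
    simp only [hgdef]
    field_simp
  -- g ≥ 1
  have hge1 : ∀ s, 0 < s → 1 ≤ g s := by
    intro s hs
    by_contra hlt
    push_neg at hlt
    have h1 : (0:ℝ) < 1 - g s := by linarith
    set t := s / (1 - g s) with htdef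
    have ht : 0 < t := div_pos hs h1
    have harg : s + g s * t = t := by
      rw [htdef]
      field_simp
      ring
    have := hmul s t hs ht
    rw [harg] at this
    have hgt := hg t ht
    have : g s = 1 := by
      have h2 : g t * 1 = g s * g t := by linarith [this]
      have := mul_right_cancel₀ (ne_of_gt hgt) (by linarith [h2] : g s * g t = 1 * g t)
      linarith
    linarith
  -- monotone
  have hmono : ∀ s u, 0 < s → s < u → g s ≤ g u := by
    intro s u hs hsu
    have hgs := hg s hs
    set t := (u - s) / g s with htdef
    have ht : 0 < t := div_pos (by linarith) hgs
    have harg : s + g s * t = u := by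
      rw [htdef]; field_simp; ring
    have h := hmul s t hs ht
    rw [harg] at h
    have := hge1 t ht
    nlinarith
  by_cases hone : ∃ s₀, 0 < s₀ ∧ g s₀ = 1
  · -- g ≡ 1
    obtain ⟨s₀, hs₀, hgs₀⟩ := hone
    have hstep : ∀ x, s₀ < x → g x = g (x - s₀) := by
      intro x hx
      have hxs : 0 < x - s₀ := by linarith
      have h := hmul s₀ (x - s₀) hs₀ hxs
      rw [hgs₀] at h
      simpa using h
    have hind : ∀ n : ℕ, ∀ x, 0 < x → x ≤ (n + 1 : ℝ) * s₀ → g x = 1 := by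
      intro n
      induction n with
      | zero =>
        intro x hx hxle
        simp only [Nat.cast_zero, zero_add, one_mul] at hxle
        rcases eq_or_lt_of_le hxle with h | h
        · rw [h, hgs₀]
        · exact le_antisymm (by rw [← hgs₀]; exact hmono x s₀ hx h) (hge1 x hx)
      | succ n ih =>
        intro x hx hxle
        by_cases hcase : x ≤ (n + 1 : ℝ) * s₀
        · exact ih x hx hcase
        · push_neg at hcase
          have hxgt : s₀ < x := by nlinarith [hs₀]
          rw [hstep x hxgt]
          apply ih (x - s₀) (by linarith)
          push_cast at hxle ⊢
          linarith
    have hall : ∀ x, 0 < x → g x = 1 := by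
      intro x hx
      obtain ⟨n, hn⟩ := exists_nat_ge (x / s₀)
      apply hind n x hx
      have : x / s₀ ≤ (n:ℝ) := hn
      have : x ≤ (n:ℝ) * s₀ := by
        rw [div_le_iff₀ hs₀] at this
        linarith
      nlinarith
    refine ⟨0, le_refl 0, fun x hx => ?_⟩
    have hgx := hall x hx
    have hfx := hpos x hx
    simp only [hgdef] at hgx
    rw [zero_mul, zero_add]
    field_simp at hgx ⊢
    linarith
  · -- g > 1 everywhere
    push_neg at hone
    have hgt1 : ∀ s, 0 < s → 1 < g s := by
      intro s hs
      rcases lt_or_eq_of_le (hge1 s hs) with h | h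
      · exact h
      · exact absurd h.symm (hone s hs)
    have hstrict : ∀ s u, 0 < s → s < u → g s < g u := by
      intro s u hs hsu
      have hgs := hg s hs
      set t := (u - s) / g s with htdef
      have ht : 0 < t := div_pos (by linarith) hgs
      have harg : s + g s * t = u := by
        rw [htdef]; field_simp; ring
      have h := hmul s t hs ht
      rw [harg] at h
      have := hgt1 t ht
      nlinarith
    have heqarg : ∀ s t, 0 < s → 0 < t → s + g s * t = t + g t * s := by
      intro s t hs ht
      by_contra hne
      have h1 := hmul s t hs ht
      have h2 := hmul t s ht hs
      rcases lt_or_gt_of_ne hne with h | h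
      · have := hstrict _ _ (hargpos s t hs ht) h
        rw [h1, h2] at this
        nlinarith
      · have := hstrict _ _ (hargpos t s ht hs) h
        rw [h1, h2] at this
        nlinarith
    refine ⟨g 1 - 1, by linarith [hge1 1 one_pos], fun x hx => ?_⟩
    have h := heqarg x 1 hx one_pos
    have hlin : g x = (g 1 - 1) * x + 1 := by nlinarith [h]
    have hfx := hpos x hx
    simp only [hgdef] at hlin
    rw [← hlin]
    field_simp
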